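/- If the popularity p is nonincreasing (p_1 ≥ p_2 ≥ … ≥ p_N), then there exists an optimal placement q* minimizing R_l over {q ∈ [0,1]^N : Σ q_j ≤ M} that is nonincreasing: q*_1 ≥ q*_2 ≥ … ≥ q*_N. -/
import Mathlib

def Feasible {N : ℕ} (M : ℝ) (q : Fin N → ℝ) : Prop :=
  (∀ j, q j ∈ Set.Icc (0:ℝ) 1) ∧ ∑ j, q j ≤ M

/-- If the popularity is nonincreasing then there exists a nonincreasing optimal
placement minimizing the legitimate-user rate over the feasible set. -/
theorem stmt_14 {N S : ℕ} (hN : 0 < N) (hS : 0 < S)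
    (γ : Fin S → ℝ) (hγ : ∀ d, 0 ≤ γ d)
    (p : Fin N → ℝ) (hp : ∀ j, 0 ≤ p j)
    (hpmono : ∀ i j : Fin N, i ≤ j → p j ≤ p i)
    (M : ℝ) (hM0 : 0 < M) :
    ∃ qstar : Fin N → ℝ, Feasible M qstar ∧
      (∀ q : Fin N → ℝ, Feasible M q →
        ∑ d : Fin S, ∑ j : Fin N,
            γ d * p j * max (1 - ((d.val + 1 : ℕ) : ℝ) * qstar j) 0 ≤
        ∑ d : Fin S, ∑ j : Fin N,
            γ d * p j * max (1 - ((d.val + 1 : ℕ) : ℝ) * q j) 0) ∧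
      (∀ i j : Fin N, i ≤ j → qstar j ≤ qstar i) := by
  classical
  set F : (Fin N → ℝ) → ℝ := fun q => ∑ d : Fin S, ∑ j : Fin N,
      γ d * p j * max (1 - ((d.val + 1 : ℕ) : ℝ) * q j) 0 with hF
  have hFcont : Continuous F := by
    apply continuous_finset_sum
    intro d _
    apply continuous_finset_sum
    intro j _
    exact continuous_const.mul
      ((continuous_const.sub (continuous_const.mul (continuous_apply j))).max continuous_const)
  set K : Set (Fin N → ℝ) := {q | Feasible M q} with hK
  have hKeq : K = (Set.univ.pi fun _ => Set.Icc (0:ℝ) 1) ∩ {q | ∑ j, q j ≤ M} := by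
    ext q
    simp only [hK, Set.mem_setOf_eq, Set.mem_inter_iff, Set.mem_univ_pi, Set.mem_Icc, Feasible]
  have hKc : IsCompact K := by
    rw [hKeq]
    exact (isCompact_univ_pi fun _ => isCompact_Icc).inter_right
      (isClosed_le (continuous_finset_sum _ fun j _ => continuous_apply j) continuous_const)
  have hK0 : (fun _ => (0:ℝ)) ∈ K := by
    constructor
    · intro j; exact ⟨le_refl 0, zero_le_one⟩
    · simp [hM0.le]
  obtain ⟨q0, hq0K, hq0min⟩ := hKc.exists_isMinOn ⟨_, hK0⟩ hFcont.continuousOn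
  set σ : Equiv.Perm (Fin N) := Tuple.sort (fun i => -q0 i) with hσ
  set qstar : Fin N → ℝ := fun j => q0 (σ j) with hqstar
  have hanti : ∀ i j : Fin N, i ≤ j → qstar j ≤ qstar i := by
    intro i j hij
    have := Tuple.monotone_sort (fun i => -q0 i) hij
    simp only [Function.comp_apply] at this
    simpa [hqstar] using this
  have hfeas : Feasible M qstar := by
    refine ⟨fun j => hq0K.1 (σ j), ?_⟩
    calc ∑ j, qstar j = ∑ j, q0 j := Equiv.sum_comp σ q0
    _ ≤ M := hq0K.2
  have key : F qstar ≤ F q0 := by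
    apply Finset.sum_le_sum
    intro d _
    set c : ℝ := ((d.val + 1 : ℕ) : ℝ) with hc
    have hcpos : (0:ℝ) ≤ c := by positivity
    set g : Fin N → ℝ := fun j => max (1 - c * qstar j) 0 with hg
    have hgmono : ∀ i j : Fin N, i ≤ j → g i ≤ g j := by
      intro i j hij
      have h1 : qstar j ≤ qstar i := hanti i j hij
      have : 1 - c * qstar i ≤ 1 - c * qstar j := by nlinarith
      exact max_le_max this (le_refl 0)
    have hav : Antivary p g := by
      intro i j hij
      rcases le_total i j with hle | hle
      · exact hpmono i j hle
      · exact absurd (hgmono j i hle) (not_le.mpr hij)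
    have hre : ∑ j, p j • g j ≤ ∑ j, p j • g (σ⁻¹ j) :=
      hav.sum_smul_le_sum_smul_comp_perm (σ := σ⁻¹)
    have hq0g : ∀ j, max (1 - c * q0 j) 0 = g (σ⁻¹ j) := by
      intro j
      simp [hg, hqstar]
    calc ∑ j, γ d * p j * max (1 - c * qstar j) 0
        = γ d * ∑ j, p j • g j := by
          rw [Finset.mul_sum]; apply Finset.sum_congr rfl; intro j _
          simp [hg, smul_eq_mul]; ring
      _ ≤ γ d * ∑ j, p j • g (σ⁻¹ j) := mul_le_mul_of_nonneg_left hre (hγ d)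
      _ = ∑ j, γ d * p j * max (1 - c * q0 j) 0 := by
          rw [Finset.mul_sum]; apply Finset.sum_congr rfl; intro j _
          rw [hq0g j]; simp [smul_eq_mul]; ring
  refine ⟨qstar, hfeas, ?_, hanti⟩
  intro q hq
  exact key.trans (hq0min hq)
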